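/- arXiv:1210.4493 — 2 statements merged into one kernel-verified Lean document; each statement's English description precedes it below -/
import Mathlib

section
/- Let χ be a multiplicative character of exact order N on a finite field F, and ε the trivial character. For any fixed nonzero ξ ∈ F, ∑_{j=1}^{N} χ^j(ξ) ∑_{a+b=1, a≠0} χ^j(b) = r − 1 − N·δ_N(ξ), where δ_N(ξ) = 1 if ξ is an N-th power in F^* and 0 otherwise. -/
open Finset
open scoped Classical

lemma aux_orderOf_gen {F : Type*} [Field F] [Fintype F] (χ : MulChar F ℂ)
    {g : Fˣ} (hg : ∀ x : Fˣ, x ∈ Subgroup.zpowers g) :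
    orderOf (χ g.val) = orderOf χ := by
  rw [orderOf_eq_orderOf_iff]
  intro n
  rw [MulChar.eq_iff hg (χ ^ n) 1, MulChar.pow_apply_coe, MulChar.one_apply_coe]

lemma aux_key {F : Type*} [Field F] [Fintype F] (N : ℕ) (hN : 0 < N)
    (χ : MulChar F ℂ) (hord : orderOf χ = N) (ξ : F) (hξ : ξ ≠ 0) :
    χ ξ = 1 ↔ ∃ y : F, y ≠ 0 ∧ y ^ N = ξ := by
  constructor
  · intro h1
    obtain ⟨g, hg⟩ := IsCyclic.exists_generator (α := Fˣ)
    have hog : orderOf (χ g.val) = N := hord ▸ aux_orderOf_gen χ hg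
    obtain ⟨k, hk⟩ := hg (Units.mk0 ξ hξ)
    have hk' : g ^ k = Units.mk0 ξ hξ := hk
    have hξk : ξ = (g.val) ^ k := by
      rw [← Units.val_zpow_eq_zpow_val, hk', Units.val_mk0]
    have hog' : orderOf (χ.toUnitHom g) = N := by
      rw [← orderOf_units, MulChar.coe_toUnitHom]; exact hog
    have h3 : (χ.toUnitHom g) ^ k = 1 := by
      rw [← map_zpow, hk']
      exact Units.ext (by rw [MulChar.coe_toUnitHom, Units.val_mk0, h1, Units.val_one])
    have hdvd : (N : ℤ) ∣ k := hog' ▸ orderOf_dvd_iff_zpow_eq_one.mpr h3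
    obtain ⟨m, rfl⟩ := hdvd
    refine ⟨((g ^ m : Fˣ) : F), Units.ne_zero _, ?_⟩
    have hzp : ((g ^ m) ^ N : Fˣ) = g ^ ((N : ℤ) * m) := by
      rw [← zpow_natCast (g ^ m) N, ← zpow_mul, mul_comm]
    rw [← Units.val_pow_eq_pow_val, hzp, Units.val_zpow_eq_zpow_val]
    exact hξk.symm
  · rintro ⟨y, hy, rfl⟩
    have hχN : χ ^ N = 1 := by rw [← hord]; exact pow_orderOf_eq_one χ
    rw [map_pow, ← MulChar.pow_apply' χ hN.ne', hχN]
    exact MulChar.one_apply (isUnit_iff_ne_zero.mpr hy)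

/-- For χ of exact order N on F and ξ ≠ 0,
∑_{j=1}^{N} χ^j(ξ) ∑_{a+b=1, a≠0} χ^j(b) = r − 1 − N·δ_N(ξ). -/
theorem stmt_2 {F : Type*} [Field F] [Fintype F] (N : ℕ) (hN : 0 < N)
    (χ : MulChar F ℂ) (hord : orderOf χ = N) (ξ : F) (hξ : ξ ≠ 0) :
    ∑ j ∈ Icc 1 N, (χ ^ j) ξ *
        ∑ a ∈ Finset.univ.filter (fun a : F => a ≠ 0), (χ ^ j) (1 - a)
      = (Fintype.card F : ℂ) - 1 -
        N * (if ∃ y : F, y ≠ 0 ∧ y ^ N = ξ then 1 else 0) := by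
  have hχN : χ ^ N = 1 := hord ▸ pow_orderOf_eq_one χ
  have hinner : ∀ j : ℕ,
      (∑ a ∈ Finset.univ.filter (fun a : F => a ≠ 0), (χ ^ j) (1 - a))
        = (∑ b : F, (χ ^ j) b) - 1 := by
    intro j
    have hbij : ∑ a ∈ Finset.univ.filter (fun a : F => a ≠ 0), (χ ^ j) (1 - a)
        = ∑ b ∈ Finset.univ.filter (fun b : F => b ≠ 1), (χ ^ j) b := by
      refine Finset.sum_nbij' (fun a => 1 - a) (fun b => 1 - b) ?_ ?_ ?_ ?_ ?_
      · intro x hx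
        simp only [mem_filter, mem_univ, true_and] at hx ⊢
        intro h; apply hx; linear_combination -h
      · intro x hx
        simp only [mem_filter, mem_univ, true_and] at hx ⊢
        intro h; apply hx; linear_combination -h
      · intro x _; ring
      · intro x _; ring
      · intro x _; rfl
    rw [hbij, show (Finset.univ.filter (fun b : F => b ≠ 1)) = Finset.univ.erase 1 from
      Finset.filter_ne' Finset.univ 1,
      Finset.sum_erase_eq_sub (Finset.mem_univ 1), map_one]
  calc ∑ j ∈ Icc 1 N, (χ ^ j) ξ *
        ∑ a ∈ Finset.univ.filter (fun a : F => a ≠ 0), (χ ^ j) (1 - a)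
      = ∑ j ∈ Icc 1 N, ((χ ^ j) ξ * (∑ b : F, (χ ^ j) b) - (χ ^ j) ξ) := by
        refine Finset.sum_congr rfl fun j _ => ?_
        rw [hinner j]; ring
    _ = (∑ j ∈ Icc 1 N, (χ ^ j) ξ * (∑ b : F, (χ ^ j) b))
          - ∑ j ∈ Icc 1 N, (χ ^ j) ξ := Finset.sum_sub_distrib _ _
    _ = ((Fintype.card F : ℂ) - 1)
          - N * (if ∃ y : F, y ≠ 0 ∧ y ^ N = ξ then 1 else 0) := by
        congr 1
        · -- only j = N survives
          rw [Finset.sum_eq_single N]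
          · rw [hχN]
            have h1 : (1 : MulChar F ℂ) ξ = 1 := MulChar.one_apply (isUnit_iff_ne_zero.mpr hξ)
            rw [h1, one_mul, MulChar.sum_one_eq_card_units, Fintype.card_units]
            have : (1 : ℕ) ≤ Fintype.card F := Fintype.card_pos
            push_cast [Nat.cast_sub this]
            ring
          · intro j hj hjne
            simp only [mem_Icc] at hj
            have hne : χ ^ j ≠ 1 := by
              intro h
              have : N ∣ j := hord ▸ orderOf_dvd_of_pow_eq_one h
              have := Nat.le_of_dvd (by omega) this
              omega
            rw [MulChar.sum_eq_zero_of_ne_one hne, mul_zero]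
          · intro h; exact absurd (Finset.mem_Icc.mpr ⟨hN, le_rfl⟩) h
        · -- geometric sum
          have hpa : ∀ j ∈ Icc 1 N, (χ ^ j) ξ = (χ ξ) ^ j := by
            intro j hj
            simp only [mem_Icc] at hj
            exact MulChar.pow_apply' χ (by omega) ξ
          rw [Finset.sum_congr rfl hpa]
          set c : ℂ := χ ξ with hc
          have hcN : c ^ N = 1 := by
            rw [hc, ← MulChar.pow_apply' χ hN.ne', hχN,
              MulChar.one_apply (isUnit_iff_ne_zero.mpr hξ)]
          by_cases h1 : c = 1
          · rw [if_pos ((aux_key N hN χ hord ξ hξ).mp h1)]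
            simp [h1, Nat.card_Icc]
          · rw [if_neg (fun hEx => h1 ((aux_key N hN χ hord ξ hξ).mpr hEx))]
            have hs : ∑ j ∈ Finset.range (N + 1), c ^ j = 1 := by
              rw [geom_sum_eq h1, pow_succ, hcN, one_mul,
                div_self (sub_ne_zero.mpr h1)]
            have hins : Finset.range (N + 1) = insert 0 (Icc 1 N) := by
              ext x
              simp only [Finset.mem_range, Finset.mem_insert, mem_Icc, Nat.lt_succ_iff]
              omega
            rw [hins, Finset.sum_insert (by simp), pow_zero] at hs
            rw [mul_zero]
            linear_combination hs
end

section
/- Suppose χ is a multiplicative character of exact order N on a finite field F of order r, and suppose J(χ^i, χ^j) = √r for all 1 ≤ i,j ≤ N−1 with i+j ≠ N (as complex numbers, where r is a square). Then for nonzero u, v ∈ F, ∑_{1≤i,j≤N−1, i+j≠N} χ^i(u) χ^j(v) J(χ^i, χ^j) = √r · ( N² δ_N(u) δ_N(v) − N(δ_N(u) + δ_N(v) + δ_N(u v^{−1})) + 2 ). -/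
open Finset
open scoped Classical

private lemma delta_sum_aux {F : Type*} [Field F] [Fintype F] (N : ℕ) (hN : 2 ≤ N)
    (χ : MulChar F ℂ) (hord : orderOf χ = N) (w : F) (hw : w ≠ 0) :
    ∑ i ∈ Icc 1 (N - 1), (χ ^ i) w
      = (N : ℂ) * (if ∃ y : F, y ≠ 0 ∧ y ^ N = w then 1 else 0) - 1 := by
  have hN0 : N ≠ 0 := by omega
  have hwu : IsUnit w := isUnit_iff_ne_zero.mpr hw
  have hpow : ∀ n : ℕ, (χ ^ n) w = (χ w) ^ n := by
    intro n
    conv_lhs => rw [← hwu.unit_spec, MulChar.pow_apply_coe]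
    rw [hwu.unit_spec]
  have hχN : χ ^ N = 1 := by rw [← hord]; exact pow_orderOf_eq_one χ
  have hzN : (χ w) ^ N = 1 := by
    rw [← hpow, hχN, MulChar.one_apply hwu]
  -- key: χ w = 1 ↔ w is an N-th power
  have hiff : χ w = 1 ↔ ∃ y : F, y ≠ 0 ∧ y ^ N = w := by
    constructor
    · intro h1
      obtain ⟨g, hg⟩ := IsCyclic.exists_generator (α := Fˣ)
      have hog : orderOf (χ (g : F)) = N := by
        rw [← hord]
        refine orderOf_eq_orderOf_iff.mpr fun n => ?_
        rw [← MulChar.pow_apply_coe, ← MulChar.one_apply_coe (R' := ℂ) g]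
        exact (MulChar.eq_iff hg (χ ^ n) 1).symm
      obtain ⟨k, hk⟩ := (mem_powers_iff_mem_zpowers (y := hwu.unit)).mpr (hg hwu.unit)
      have hwk : w = ((g : F)) ^ k := by
        rw [← hwu.unit_spec, ← hk, Units.val_pow_eq_pow_val]
      have hdvd : N ∣ k := by
        rw [← hog]
        refine orderOf_dvd_of_pow_eq_one ?_
        rw [← map_pow, ← hwk, h1]
      obtain ⟨m, rfl⟩ := hdvd
      refine ⟨(g : F) ^ m, ?_, ?_⟩
      · exact pow_ne_zero m (Units.ne_zero g)
      · rw [← pow_mul, mul_comm, hwk]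
    · rintro ⟨y, hy0, rfl⟩
      rw [map_pow, ← MulChar.pow_apply' χ hN0, hχN,
        MulChar.one_apply (isUnit_iff_ne_zero.mpr hy0)]
  -- geometric sum
  have hrange : ∑ i ∈ range N, (χ w) ^ i = if χ w = 1 then (N : ℂ) else 0 := by
    split_ifs with h
    · simp [h]
    · rw [geom_sum_eq h, hzN]
      simp
  have hsplit : ∑ i ∈ range N, (χ w) ^ i = 1 + ∑ i ∈ Icc 1 (N - 1), (χ w) ^ i := by
    have h1 : Icc 1 (N - 1) = Ico 1 N := by
      rw [← Finset.Ico_add_one_right_eq_Icc]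
      congr 1
      omega
    rw [range_eq_Ico, Finset.sum_eq_sum_Ico_succ_bot (by omega) _, pow_zero, h1]
  have : ∑ i ∈ Icc 1 (N - 1), (χ w) ^ i
      = (N : ℂ) * (if ∃ y : F, y ≠ 0 ∧ y ^ N = w then 1 else 0) - 1 := by
    have := hsplit.symm.trans hrange
    split_ifs with h
    · rw [if_pos (hiff.mpr h)] at this
      linear_combination this
    · rw [if_neg (fun h1 => h (hiff.mp h1))] at this
      linear_combination this
  rw [← this]
  exact Finset.sum_congr rfl fun i _ => hpow i

/-- If all Jacobi sums J(χ^i,χ^j) with 1 ≤ i,j ≤ N−1, i+j ≠ N equal √r, then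
∑_{1≤i,j≤N−1, i+j≠N} χ^i(u) χ^j(v) J(χ^i,χ^j)
  = √r (N² δ_N(u) δ_N(v) − N(δ_N(u)+δ_N(v)+δ_N(uv⁻¹)) + 2). -/
theorem stmt_4 {F : Type*} [Field F] [Fintype F] (N : ℕ) (hN : 2 ≤ N)
    (χ : MulChar F ℂ) (hord : orderOf χ = N) (hχ : χ (-1) = 1)
    (hsq : ∃ t : ℕ, Fintype.card F = t ^ 2)
    (hJ : ∀ i j : ℕ, 1 ≤ i → i ≤ N - 1 → 1 ≤ j → j ≤ N - 1 → i + j ≠ N →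
      ∑ a : F, (χ ^ i) a * (χ ^ j) (1 - a) = Real.sqrt (Fintype.card F))
    (u v : F) (hu : u ≠ 0) (hv : v ≠ 0) :
    ∑ i ∈ Icc 1 (N - 1), ∑ j ∈ Icc 1 (N - 1),
        (if i + j ≠ N then
          (χ ^ i) u * (χ ^ j) v * ∑ a : F, (χ ^ i) a * (χ ^ j) (1 - a)
        else 0)
      = (Real.sqrt (Fintype.card F) : ℂ) *
        ((N : ℂ) ^ 2 * (if ∃ y : F, y ≠ 0 ∧ y ^ N = u then 1 else 0) *
            (if ∃ y : F, y ≠ 0 ∧ y ^ N = v then 1 else 0)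
          - N * ((if ∃ y : F, y ≠ 0 ∧ y ^ N = u then 1 else 0)
              + (if ∃ y : F, y ≠ 0 ∧ y ^ N = v then 1 else 0)
              + (if ∃ y : F, y ≠ 0 ∧ y ^ N = u * v⁻¹ then 1 else 0))
          + 2) := by
  have hN0 : N ≠ 0 := by omega
  set s : ℂ := (Real.sqrt (Fintype.card F) : ℂ) with hs
  set δu : ℂ := (if ∃ y : F, y ≠ 0 ∧ y ^ N = u then 1 else 0) with hδu
  set δv : ℂ := (if ∃ y : F, y ≠ 0 ∧ y ^ N = v then 1 else 0) with hδv
  set δw : ℂ := (if ∃ y : F, y ≠ 0 ∧ y ^ N = u * v⁻¹ then 1 else 0) with hδw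
  have hw : u * v⁻¹ ≠ 0 := mul_ne_zero hu (inv_ne_zero hv)
  -- step 1: replace Jacobi sums by s
  have step1 : ∑ i ∈ Icc 1 (N - 1), ∑ j ∈ Icc 1 (N - 1),
        (if i + j ≠ N then
          (χ ^ i) u * (χ ^ j) v * ∑ a : F, (χ ^ i) a * (χ ^ j) (1 - a)
        else 0)
      = s * ∑ i ∈ Icc 1 (N - 1), ∑ j ∈ Icc 1 (N - 1),
          (if i + j ≠ N then (χ ^ i) u * (χ ^ j) v else 0) := by
    rw [Finset.mul_sum]
    refine Finset.sum_congr rfl fun i hi => ?_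
    rw [Finset.mul_sum]
    refine Finset.sum_congr rfl fun j hj => ?_
    rw [mem_Icc] at hi hj
    split_ifs with h
    · rw [hJ i j hi.1 hi.2 hj.1 hj.2 h]; ring
    · ring
  rw [step1]
  congr 1
  -- step 2: compute the inner sums
  have inner : ∀ i ∈ Icc 1 (N - 1),
      ∑ j ∈ Icc 1 (N - 1), (if i + j ≠ N then (χ ^ i) u * (χ ^ j) v else 0)
      = (χ ^ i) u * (∑ j ∈ Icc 1 (N - 1), (χ ^ j) v) - (χ ^ i) u * (χ ^ (N - i)) v := by
    intro i hi
    rw [mem_Icc] at hi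
    have hmem : N - i ∈ Icc 1 (N - 1) := by rw [mem_Icc]; omega
    have : ∀ j ∈ Icc 1 (N - 1),
        (if i + j ≠ N then (χ ^ i) u * (χ ^ j) v else 0)
        = (χ ^ i) u * (χ ^ j) v - (if j = N - i then (χ ^ i) u * (χ ^ j) v else 0) := by
      intro j hj
      rw [mem_Icc] at hj
      by_cases h : j = N - i
      · rw [if_neg (by omega), if_pos h]; ring
      · rw [if_pos (by omega), if_neg h]; ring
    rw [Finset.sum_congr rfl this, Finset.sum_sub_distrib, Finset.sum_ite_eq' _ _ _,
      if_pos hmem, Finset.mul_sum]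
  rw [Finset.sum_congr rfl inner, Finset.sum_sub_distrib, ← Finset.sum_mul]
  -- cross term
  have cross : ∀ i ∈ Icc 1 (N - 1), (χ ^ i) u * (χ ^ (N - i)) v = (χ ^ i) (u * v⁻¹) := by
    intro i hi
    rw [mem_Icc] at hi
    have hvu : IsUnit v := isUnit_iff_ne_zero.mpr hv
    have hpv : ∀ n : ℕ, (χ ^ n) v = (χ v) ^ n := by
      intro n
      conv_lhs => rw [← hvu.unit_spec, MulChar.pow_apply_coe]
      rw [hvu.unit_spec]
    have hu' : u = (u * v⁻¹) * v := by field_simp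
    have hχN : χ ^ N = 1 := by rw [← hord]; exact pow_orderOf_eq_one χ
    have hvN : (χ v) ^ N = 1 := by
      rw [← hpv, hχN, MulChar.one_apply hvu]
    calc (χ ^ i) u * (χ ^ (N - i)) v
        = (χ ^ i) (u * v⁻¹) * ((χ ^ i) v * (χ ^ (N - i)) v) := by
          rw [← mul_assoc, ← map_mul, ← hu']
      _ = (χ ^ i) (u * v⁻¹) * ((χ v) ^ N) := by
          rw [hpv, hpv, ← pow_add]
          congr 2
          omega
      _ = (χ ^ i) (u * v⁻¹) := by rw [hvN, mul_one]
  rw [Finset.sum_congr rfl cross]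
  rw [delta_sum_aux N hN χ hord u hu, delta_sum_aux N hN χ hord v hv,
    delta_sum_aux N hN χ hord (u * v⁻¹) hw]
  rw [← hδu, ← hδv, ← hδw]
  ring
end
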